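/- Let θ be an infinite cardinal and let λ be a cardinal with cf(2^θ) ≤ λ < 2^θ. Then there is no universal graph of cardinality λ; that is, there is no graph G of cardinality λ such that every graph of cardinality λ embeds as an induced subgraph into G. -/

import Mathlib

universe u

open Cardinal

/-- Diagonalization lemma: if `cf(μ) ≤ lam < μ` and `A` assigns to each point of
`μ.ord.ToType` a set of size `≤ lam`, then there is a set `F` of size `≤ lam` not
contained in any `A y`. -/
lemma diag_lemma {μ lam : Cardinal.{u}} (hμ : ℵ₀ ≤ μ) (hcf : μ.ord.cof ≤ lam)
    (hlam : lam < μ) (A : μ.ord.ToType → Set μ.ord.ToType)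
    (hA : ∀ y, #(A y) ≤ lam) :
    ∃ F : Set μ.ord.ToType, #F ≤ lam ∧ ∀ y, ¬ F ⊆ A y := by
  obtain ⟨S, hSunb, hScard⟩ := Order.exists_cof_eq μ.ord.ToType
  rw [← Ordinal.cof_type, Ordinal.type_toType] at hScard
  set U : μ.ord.ToType → Set μ.ord.ToType := fun i => ⋃ j ∈ Set.Iic i, A j with hUdef
  have hUlt : ∀ i, #(U i) < μ := by
    intro i
    have h1 : #(U i) ≤ #(Set.Iic i) * ⨆ j : Set.Iic i, #(A j.1) :=
      Cardinal.mk_biUnion_le A (Set.Iic i)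
    have h2 : (⨆ j : Set.Iic i, #(A j.1)) ≤ lam := ciSup_le' fun j => hA _
    have h3 : #(Set.Iic i) < μ := by
      rw [← Set.Iio_union_right]
      have : #(Set.Iio i ∪ {i} : Set μ.ord.ToType) ≤ #(Set.Iio i) + #({i} : Set _) :=
        Cardinal.mk_union_le _ _
      refine this.trans_lt (Cardinal.add_lt_of_lt hμ (Cardinal.mk_Iio_ord_toType i) ?_)
      rw [Cardinal.mk_singleton]
      exact lt_of_lt_of_le Cardinal.one_lt_aleph0 hμ
    calc #(U i) ≤ #(Set.Iic i) * ⨆ j : Set.Iic i, #(A j.1) := h1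
      _ ≤ #(Set.Iic i) * lam := mul_le_mul_right h2 _
      _ < μ := Cardinal.mul_lt_of_lt hμ h3 hlam
  have hx : ∀ i, ∃ z, z ∉ U i := by
    intro i
    by_contra h
    push_neg at h
    have hu : U i = Set.univ := Set.eq_univ_of_forall h
    have := hUlt i
    rw [hu, Cardinal.mk_univ, Cardinal.mk_ord_toType] at this
    exact lt_irrefl _ this
  choose x hxmem using hx
  refine ⟨x '' S, ?_, ?_⟩
  · exact Cardinal.mk_image_le.trans (hScard ▸ hcf)
  · intro y hsub
    obtain ⟨i, hiS, hiy⟩ := hSunb y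
    have hyi : y ≤ i := hiy
    have hmem : x i ∈ A y := hsub ⟨i, hiS, rfl⟩
    exact hxmem i (Set.mem_biUnion hyi hmem)

/-- If `θ` is infinite and `cf(2^θ) ≤ λ < 2^θ`, then there is no universal graph of
cardinality `λ`: no graph `G` with `|G| = λ` embeds (as an induced subgraph) every
graph of cardinality `λ`. -/
theorem stmt5 (θ lam : Cardinal.{u}) (hθ : ℵ₀ ≤ θ)
    (hcf : ((2 : Cardinal.{u}) ^ θ).ord.cof ≤ lam) (hlt : lam < 2 ^ θ) :
    ¬ ∃ (V : Type u) (G : SimpleGraph V), #V = lam ∧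
        ∀ (W : Type u) (H : SimpleGraph W), #W = lam → Nonempty (H ↪g G) := by
  rintro ⟨V, G, hV, huniv⟩
  set T : Type u := θ.out with hTdef
  have hTcard : #T = θ := mk_out θ
  set μ : Cardinal.{u} := (2 : Cardinal.{u}) ^ θ with hμdef
  have hμ2 : (0 : Cardinal) < 2 := by norm_num
  have hμpos : (0 : Cardinal) < μ := Cardinal.power_pos _ hμ2
  have hμ : ℵ₀ ≤ μ := hθ.trans (Cardinal.cantor θ).le
  have hμθ : μ ^ θ = μ := by
    rw [hμdef, ← Cardinal.power_mul, Cardinal.mul_eq_self hθ]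
  -- θ < cf(μ)
  have hθcf : θ < μ.ord.cof := by
    by_contra h
    push_neg at h
    have h1 : μ < μ ^ μ.ord.cof := Cardinal.lt_power_cof hμ
    have h2 : μ ^ μ.ord.cof ≤ μ ^ θ := Cardinal.power_le_power_left hμpos.ne' h
    rw [hμθ] at h2
    exact absurd (h1.trans_le h2) (lt_irrefl μ)
  have hθlam : θ < lam := hθcf.trans_le hcf
  have hlaminf : ℵ₀ ≤ lam :=
    le_trans (Ordinal.aleph0_le_cof.mpr (Cardinal.isSuccLimit_ord hμ)) hcf
  have hVne : Nonempty V := by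
    rw [← Cardinal.mk_ne_zero_iff, hV]
    exact (lt_of_lt_of_le Cardinal.aleph0_pos hlaminf).ne'
  have hYcard : #μ.ord.ToType = μ := Cardinal.mk_ord_toType μ
  -- equiv between μ.ord.ToType and Set T
  have hSetT : #(Set T) = μ := by rw [Cardinal.mk_set, hTcard]
  obtain ⟨e⟩ : Nonempty (μ.ord.ToType ≃ Set T) := Cardinal.eq.mp (hYcard.trans hSetT.symm)
  -- surjection from μ.ord.ToType onto T → V
  have hI : #(T → V) ≤ #μ.ord.ToType := by
    rw [hYcard, ← Cardinal.power_def, hTcard, hV]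
    calc lam ^ θ ≤ μ ^ θ := Cardinal.power_le_power_right hlt.le
      _ = μ := hμθ
  obtain ⟨ι⟩ : Nonempty ((T → V) ↪ μ.ord.ToType) := by
    rwa [← Cardinal.le_def]
  have hIne : Nonempty (T → V) := ⟨fun _ => hVne.some⟩
  set s : μ.ord.ToType → (T → V) := Function.invFun ι with hsdef
  have hs : Function.Surjective s := Function.invFun_surjective ι.injective
  -- the realized neighborhood traces
  set Real : (T → V) → Set (Set T) :=
    fun g => Set.range (fun v : V => {a : T | G.Adj (g a) v}) with hRealdef
  set A : μ.ord.ToType → Set μ.ord.ToType := fun y => e ⁻¹' (Real (s y)) with hAdef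
  have hA : ∀ y, #(A y) ≤ lam := by
    intro y
    calc #(A y) ≤ #(Real (s y)) := Cardinal.mk_preimage_of_injective _ _ e.injective
      _ ≤ #V := Cardinal.mk_range_le
      _ = lam := hV
  obtain ⟨F, hFcard, hF⟩ := diag_lemma hμ hcf hlt A hA
  -- enumerate e '' F by lam.out
  have hF'card : #(e '' F) ≤ #(lam.out) := by
    rw [mk_out]
    exact Cardinal.mk_image_le.trans hFcard
  obtain ⟨j⟩ : Nonempty ((e '' F : Set (Set T)) ↪ lam.out) :=
    (Cardinal.le_def _ _).mp hF'card
  have hYne : Nonempty μ.ord.ToType := by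
    rw [← Cardinal.mk_ne_zero_iff, hYcard]
    exact (hμpos).ne'
  have hF'ne : Nonempty (e '' F : Set (Set T)) := by
    obtain ⟨z, hz, _⟩ := Set.not_subset.mp (hF hYne.some)
    exact ⟨⟨e z, z, hz, rfl⟩⟩
  set c : lam.out → Set T := fun k => ((Function.invFun j k : (e '' F : Set (Set T)))).1
    with hcdef
  have hc : ∀ B ∈ e '' F, ∃ k, c k = B := by
    intro B hB
    refine ⟨j ⟨B, hB⟩, ?_⟩
    rw [hcdef]
    simp only
    rw [Function.leftInverse_invFun j.injective ⟨B, hB⟩]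
  -- the test graph H on T ⊕ lam.out
  set H : SimpleGraph (T ⊕ lam.out) :=
    { Adj := fun u v =>
        (∃ a k, u = Sum.inl a ∧ v = Sum.inr k ∧ a ∈ c k) ∨
        (∃ a k, v = Sum.inl a ∧ u = Sum.inr k ∧ a ∈ c k),
      symm := by
        constructor
        rintro u v (⟨a, k, h1, h2, h3⟩ | ⟨a, k, h1, h2, h3⟩)
        · exact Or.inr ⟨a, k, h1, h2, h3⟩
        · exact Or.inl ⟨a, k, h1, h2, h3⟩,
      loopless := by
        constructor
        rintro u (⟨a, k, h1, h2, _⟩ | ⟨a, k, h1, h2, _⟩) <;>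
          · rw [h1] at h2; exact Sum.inl_ne_inr h2 } with hHdef
  have hHadj : ∀ (a : T) (k : lam.out), H.Adj (Sum.inl a) (Sum.inr k) ↔ a ∈ c k := by
    intro a k
    constructor
    · rintro (⟨a', k', h1, h2, h3⟩ | ⟨a', k', h1, h2, _⟩)
      · rw [Sum.inl.injEq] at h1
        rw [Sum.inr.injEq] at h2
        rwa [h1, h2]
      · exact absurd h2 (Sum.inl_ne_inr)
    · intro h
      exact Or.inl ⟨a, k, rfl, rfl, h⟩
  have hW : #(T ⊕ lam.out) = lam := by
    rw [Cardinal.mk_sum, Cardinal.lift_id, Cardinal.lift_id, hTcard, mk_out]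
    exact Cardinal.add_eq_right hlaminf hθlam.le
  obtain ⟨f⟩ := huniv (T ⊕ lam.out) H hW
  set g : T → V := fun a => f (Sum.inl a) with hgdef
  obtain ⟨y, hy⟩ := hs g
  apply hF y
  intro z hz
  show e z ∈ Real (s y)
  rw [hy]
  obtain ⟨k, hk⟩ := hc (e z) ⟨z, hz, rfl⟩
  refine ⟨f (Sum.inr k), ?_⟩
  rw [← hk]
  ext a
  simp only [Set.mem_setOf_eq, hgdef]
  rw [f.map_adj_iff]
  exact hHadj a k
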